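/- Let G be a finite simple connected graph on n vertices with Sudoku number sn(G) = n − 1, let φ be a 1-minimal proper χ(G)-colouring of G, and let v be a vertex with φ(v) = 1. Then v is full with respect to φ and its degree satisfies |N(v)| = χ(G) − 1; in particular, all neighbours of v receive pairwise distinct colours under φ. -/

import Mathlib

/-- A proper `k`-colouring of `G` using colours `{1, …, k}`. -/
def IsProperColouring {V : Type*} (G : SimpleGraph V) (k : ℕ) (φ : V → ℕ) : Prop :=
  (∀ v, φ v ∈ Finset.Icc 1 k) ∧ ∀ ⦃u v⦄, G.Adj u v → φ u ≠ φ v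

/-- A partial proper `k`-colouring of `G` (uncoloured vertices get `none`). -/
def IsPartialProper {V : Type*} (G : SimpleGraph V) (k : ℕ) (ψ : V → Option ℕ) : Prop :=
  (∀ v c, ψ v = some c → c ∈ Finset.Icc 1 k) ∧
    ∀ ⦃u v⦄, G.Adj u v → ∀ c, ψ u = some c → ψ v ≠ some c

/-- `φ` extends the partial colouring `ψ`. -/
def ExtendsPartial {V : Type*} (φ : V → ℕ) (ψ : V → Option ℕ) : Prop :=
  ∀ v c, ψ v = some c → φ v = c

/-- A Sudoku colouring: a partial proper `k`-colouring with exactly one extension to a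
proper `k`-colouring of all of `G`. -/
def IsSudoku {V : Type*} (G : SimpleGraph V) (k : ℕ) (ψ : V → Option ℕ) : Prop :=
  IsPartialProper G k ψ ∧ ∃! φ : V → ℕ, IsProperColouring G k φ ∧ ExtendsPartial φ ψ

/-- The Sudoku number: the least number of coloured vertices in a Sudoku colouring. -/
noncomputable def sudokuNumber {V : Type*} [Fintype V] (G : SimpleGraph V) (k : ℕ) : ℕ :=
  sInf {m | ∃ ψ : V → Option ℕ, IsSudoku G k ψ ∧
    (Finset.univ.filter fun v => (ψ v).isSome).card = m}

/-- The set of colours appearing on the coloured neighbours of `v` under `ψ`. -/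
def nbrColours {V : Type*} [Fintype V] [DecidableEq V] (G : SimpleGraph V)
    [DecidableRel G.Adj] (ψ : V → Option ℕ) (v : V) : Finset ℕ :=
  (G.neighborFinset v).biUnion fun u => (ψ u).toFinset

/-- A vertex is full (w.r.t. a proper `k`-colouring `φ`) if every colour other than its own
appears on its neighbourhood. -/
def IsFull {V : Type*} [Fintype V] [DecidableEq V] (G : SimpleGraph V)
    [DecidableRel G.Adj] (k : ℕ) (φ : V → ℕ) (v : V) : Prop :=
  (G.neighborFinset v).image φ = Finset.Icc 1 k \ {φ v}

/-- A proper `k`-colouring is 1-minimal if it has as few colour-1 vertices as possible. -/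
def IsOneMinimal {V : Type*} [Fintype V] (G : SimpleGraph V) (k : ℕ) (φ : V → ℕ) : Prop :=
  IsProperColouring G k φ ∧ ∀ φ' : V → ℕ, IsProperColouring G k φ' →
    (Finset.univ.filter fun v => φ v = 1).card ≤ (Finset.univ.filter fun v => φ' v = 1).card

lemma aux_full {V : Type*} [Fintype V] [DecidableEq V] (G : SimpleGraph V)
    [DecidableRel G.Adj] (k : ℕ) (φ : V → ℕ) (hφ : IsOneMinimal G k φ)
    (v : V) (hv : φ v = 1) :
    (G.neighborFinset v).image φ = Finset.Icc 1 k \ {φ v} := by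
  obtain ⟨⟨hmem, hadj⟩, hmin⟩ := hφ
  apply Finset.Subset.antisymm
  · intro d hd
    simp only [Finset.mem_image, SimpleGraph.mem_neighborFinset] at hd
    obtain ⟨u, hu, rfl⟩ := hd
    simp only [Finset.mem_sdiff, Finset.mem_singleton]
    exact ⟨hmem u, fun h => hadj hu h.symm⟩
  · intro d hd
    simp only [Finset.mem_sdiff, Finset.mem_singleton] at hd
    obtain ⟨hdIcc, hdne⟩ := hd
    by_contra himg
    have hnot : ∀ u, G.Adj v u → φ u ≠ d := by
      intro u hu h
      exact himg (Finset.mem_image.2 ⟨u, by simpa using hu, h⟩)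
    set φ' : V → ℕ := fun u => if u = v then d else φ u with hφ'
    have hφ'v : φ' v = d := by simp [φ']
    have hφ'ne : ∀ u, u ≠ v → φ' u = φ u := by intro u h; simp [φ', h]
    have hprop : IsProperColouring G k φ' := by
      constructor
      · intro u
        by_cases h : u = v
        · rw [h, hφ'v]; exact hdIcc
        · rw [hφ'ne u h]; exact hmem u
      · intro x y hxy
        by_cases hx : x = v
        · have hy : y ≠ v := by
            intro h; rw [hx, h] at hxy; exact G.loopless.irrefl v hxy
          rw [hx, hφ'v, hφ'ne y hy]
          have h1 : G.Adj v y := by rw [hx] at hxy; exact hxy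
          exact fun h => hnot y h1 h.symm
        · by_cases hy : y = v
          · have h1 : G.Adj v x := by rw [hy] at hxy; exact hxy.symm
            rw [hy, hφ'v, hφ'ne x hx]
            exact hnot x h1
          · rw [hφ'ne x hx, hφ'ne y hy]
            exact hadj hxy
    have hle := hmin φ' hprop
    have hd1 : d ≠ 1 := hv ▸ hdne
    have hsetEq : (Finset.univ.filter fun u => φ' u = 1) =
        (Finset.univ.filter fun u => φ u = 1).erase v := by
      ext u
      by_cases h : u = v
      · subst h
        simp [hφ'v, hd1, Finset.mem_filter, Finset.mem_erase]
      · simp [hφ'ne u h, h, Finset.mem_filter, Finset.mem_erase]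
    have hvmem : v ∈ Finset.univ.filter fun u => φ u = 1 := by simp [hv]
    have hcard1 : 1 ≤ (Finset.univ.filter fun u => φ u = 1).card :=
      Finset.card_pos.2 ⟨v, hvmem⟩
    rw [hsetEq, Finset.card_erase_of_mem hvmem] at hle
    omega

lemma aux_alt {V : Type*} [Fintype V] [DecidableEq V] (G : SimpleGraph V)
    [DecidableRel G.Adj] (k : ℕ)
    (hsn : sudokuNumber G k = Fintype.card V - 1)
    (φ : V → ℕ) (hφ : IsOneMinimal G k φ) (v : V) (hv : φ v = 1)
    (c : ℕ) (w w' : V) (hw : w ∈ G.neighborFinset v) (hw' : w' ∈ G.neighborFinset v)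
    (hne : w ≠ w') (hcw : φ w = c) (hcw' : φ w' = c) :
    ∃ c', c' ∈ Finset.Icc 1 k ∧ c' ≠ 1 ∧ c' ≠ c ∧
      ∀ u ∈ G.neighborFinset w, u ≠ v → c' ≠ φ u := by
  classical
  have hfull := aux_full G k φ hφ v hv
  have hadjvw : G.Adj v w := by simpa using hw
  have hadjvw' : G.Adj v w' := by simpa using hw'
  have hvw : v ≠ w := hadjvw.ne
  have hvw' : v ≠ w' := hadjvw'.ne
  set ψ : V → Option ℕ := fun u => if u = v ∨ u = w then none else some (φ u) with hψ
  have hψeq : ∀ u, u ≠ v → u ≠ w → ψ u = some (φ u) := by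
    intro u h1 h2; simp [ψ, h1, h2]
  have hpp : IsPartialProper G k ψ := by
    constructor
    · intro u c0 h
      by_cases h' : u = v ∨ u = w
      · simp [ψ, h'] at h
      · simp [ψ, h'] at h
        exact h ▸ hφ.1.1 u
    · intro x y hxy c0 hx hy
      by_cases h' : x = v ∨ x = w
      · simp [ψ, h'] at hx
      · by_cases h'' : y = v ∨ y = w
        · simp [ψ, h''] at hy
        · simp [ψ, h'] at hx
          simp [ψ, h''] at hy
          exact hφ.1.2 hxy (hx.trans hy.symm)
  have hext : ExtendsPartial φ ψ := by
    intro u c0 h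
    by_cases h' : u = v ∨ u = w
    · simp [ψ, h'] at h
    · simp [ψ, h'] at h; exact h
  have hcardψ : (Finset.univ.filter fun u => (ψ u).isSome).card = Fintype.card V - 2 := by
    have hset : (Finset.univ.filter fun u => (ψ u).isSome) = ({v, w} : Finset V)ᶜ := by
      ext u
      simp only [Finset.mem_filter, Finset.mem_univ, true_and, Finset.mem_compl,
        Finset.mem_insert, Finset.mem_singleton]
      by_cases h' : u = v ∨ u = w
      · simp [ψ, h']
      · simp [ψ, h']
    rw [hset, Finset.card_compl, Finset.card_pair hvw]
  have hn2 : 1 < Fintype.card V := Fintype.one_lt_card_iff.2 ⟨v, w, hvw⟩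
  have hns : ¬ IsSudoku G k ψ := by
    intro hS
    have hmem : Fintype.card V - 2 ∈ {m | ∃ ψ' : V → Option ℕ, IsSudoku G k ψ' ∧
        (Finset.univ.filter fun u => (ψ' u).isSome).card = m} := ⟨ψ, hS, hcardψ⟩
    have hle : sudokuNumber G k ≤ Fintype.card V - 2 := Nat.sInf_le hmem
    omega
  have h2 : ∃ ξ, (IsProperColouring G k ξ ∧ ExtendsPartial ξ ψ) ∧ ξ ≠ φ := by
    by_contra h
    push_neg at h
    refine hns ⟨hpp, φ, ⟨hφ.1, hext⟩, ?_⟩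
    intro y hy
    exact h y hy
  obtain ⟨ξ, ⟨hξprop, hξext⟩, hξne⟩ := h2
  have hξeq : ∀ u, u ≠ v → u ≠ w → ξ u = φ u := fun u h1 h2 => hξext u (φ u) (hψeq u h1 h2)
  have hξv : ξ v = 1 := by
    by_contra h1
    have hIcc : ξ v ∈ Finset.Icc 1 k := hξprop.1 v
    have hmem2 : ξ v ∈ (G.neighborFinset v).image φ := by
      rw [hfull, hv]
      exact Finset.mem_sdiff.2 ⟨hIcc, by simpa using h1⟩
    obtain ⟨u, huN, huφ⟩ := Finset.mem_image.1 hmem2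
    have hadjvu : G.Adj v u := by simpa using huN
    by_cases h : u = w
    · have hwc : ξ v = c := by rw [← huφ, h, hcw]
      have hw'c : ξ w' = c := (hξeq w' hvw'.symm (Ne.symm hne)).trans hcw'
      exact hξprop.2 hadjvw' (hwc.trans hw'c.symm)
    · have heq : ξ u = φ u := hξeq u hadjvu.ne' h
      exact hξprop.2 hadjvu (by rw [heq, huφ])
  have hξw : ξ w ≠ φ w := by
    intro h
    apply hξne
    funext u
    by_cases h1 : u = v
    · rw [h1, hξv, hv]
    · by_cases h2 : u = w
      · rw [h2]; exact h
      · exact hξeq u h1 h2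
  refine ⟨ξ w, hξprop.1 w, ?_, hcw ▸ hξw, ?_⟩
  · have h3 := hξprop.2 hadjvw.symm
    rw [hξv] at h3
    exact h3
  · intro u huN h1 h
    have hadjwu : G.Adj w u := by simpa using huN
    have h2 : ξ u = φ u := hξeq u h1 hadjwu.ne'
    exact hξprop.2 hadjwu (by rw [h2, ← h])

theorem stmt_6' {V : Type*} [Fintype V] [DecidableEq V]
    (G : SimpleGraph V) [DecidableRel G.Adj] (k : ℕ)
    (hsn : sudokuNumber G k = Fintype.card V - 1)
    (φ : V → ℕ) (hφ : IsOneMinimal G k φ)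
    (v : V) (hv : φ v = 1) :
    (G.neighborFinset v).image φ = Finset.Icc 1 k \ {φ v} ∧ G.degree v = k - 1 ∧
      ∀ a ∈ G.neighborFinset v, ∀ b ∈ G.neighborFinset v, a ≠ b → φ a ≠ φ b := by
  classical
  have hfull := aux_full G k φ hφ v hv
  have hdist : ∀ a ∈ G.neighborFinset v, ∀ b ∈ G.neighborFinset v, a ≠ b → φ a ≠ φ b := by
    by_contra h
    push_neg at h
    obtain ⟨a, ha, b, hb, hab, hceq⟩ := h
    set c := φ a with hc_def
    have hcb : φ b = c := hceq.symm
    have hadjva : G.Adj v a := by simpa using ha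
    have hc1 : c ≠ 1 := by
      intro h1
      exact hφ.1.2 hadjva (hv.trans h1.symm)
    have hcI : c ∈ Finset.Icc 1 k := hφ.1.1 a
    set W : Finset V := (G.neighborFinset v).filter (fun u => φ u = c) with hW
    have haW : a ∈ W := Finset.mem_filter.2 ⟨ha, rfl⟩
    have hbW : b ∈ W := Finset.mem_filter.2 ⟨hb, hcb⟩
    have hsecond : ∀ w ∈ W, ∃ w' ∈ W, w' ≠ w := by
      intro w hw
      by_cases h : w = a
      · exact ⟨b, hbW, by rw [h]; exact fun hh => hab hh.symm⟩
      · exact ⟨a, haW, fun hh => h hh.symm⟩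
    have hch : ∀ w ∈ W, ∃ c', c' ∈ Finset.Icc 1 k ∧ c' ≠ 1 ∧ c' ≠ c ∧
        ∀ u ∈ G.neighborFinset w, u ≠ v → c' ≠ φ u := by
      intro w hw
      obtain ⟨hwN, hwc⟩ := Finset.mem_filter.1 hw
      obtain ⟨w', hw'W, hww'⟩ := hsecond w hw
      obtain ⟨hw'N, hw'c⟩ := Finset.mem_filter.1 hw'W
      exact aux_alt G k hsn φ hφ v hv c w w' hwN hw'N (fun hh => hww' hh.symm) hwc hw'c
    choose f hf1 hf2 hf3 hf4 using hch
    set g : V → ℕ := fun u => if h : u ∈ W then f u h else φ u with hg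
    have hgW : ∀ u (h : u ∈ W), g u = f u h := by intro u h; simp [g, h]
    have hgnW : ∀ u, u ∉ W → g u = φ u := by intro u h; simp [g, h]
    have hvW : v ∉ W := by
      intro h
      have : G.Adj v v := by simpa using (Finset.mem_filter.1 h).1
      exact G.loopless.irrefl v this
    have hgprop : IsProperColouring G k g := by
      constructor
      · intro u
        by_cases h : u ∈ W
        · rw [hgW u h]; exact hf1 u h
        · rw [hgnW u h]; exact hφ.1.1 u
      · intro x y hxy
        by_cases hx : x ∈ W <;> by_cases hy : y ∈ W
        · exact absurd ((Finset.mem_filter.1 hx).2.trans (Finset.mem_filter.1 hy).2.symm)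
            (hφ.1.2 hxy)
        · rw [hgW x hx, hgnW y hy]
          by_cases hyv : y = v
          · rw [hyv, hv]; exact hf2 x hx
          · exact hf4 x hx y (by simpa using hxy) hyv
        · rw [hgnW x hx, hgW y hy]
          by_cases hxv : x = v
          · rw [hxv, hv]; exact fun h => hf2 y hy h.symm
          · exact fun h => hf4 y hy x (by simpa using hxy.symm) hxv h.symm
        · rw [hgnW x hx, hgnW y hy]; exact hφ.1.2 hxy
    have hclass : (Finset.univ.filter fun u => g u = 1) =
        (Finset.univ.filter fun u => φ u = 1) := by
      ext u
      simp only [Finset.mem_filter, Finset.mem_univ, true_and]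
      by_cases h : u ∈ W
      · rw [hgW u h]
        constructor
        · intro h1; exact absurd h1 (hf2 u h)
        · intro h1; exact absurd ((Finset.mem_filter.1 h).2.symm.trans h1) hc1
      · rw [hgnW u h]
    have hgmin : IsOneMinimal G k g :=
      ⟨hgprop, fun φ' h' => by rw [hclass]; exact hφ.2 φ' h'⟩
    have hgv : g v = 1 := by rw [hgnW v hvW]; exact hv
    have hgfull := aux_full G k g hgmin v hgv
    have hcmem : c ∈ (G.neighborFinset v).image g := by
      rw [hgfull, hgv]
      exact Finset.mem_sdiff.2 ⟨hcI, by simpa using hc1⟩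
    obtain ⟨u, huN, hug⟩ := Finset.mem_image.1 hcmem
    by_cases h : u ∈ W
    · exact hf3 u h (by rw [← hgW u h]; exact hug)
    · exact h (Finset.mem_filter.2 ⟨huN, by rw [← hgnW u h]; exact hug⟩)
  refine ⟨hfull, ?_, hdist⟩
  have hk1 : 1 ≤ k := by
    have := hφ.1.1 v
    rw [hv, Finset.mem_Icc] at this
    exact this.2
  have hinj : Set.InjOn φ (G.neighborFinset v) := by
    intro x hx y hy hxy
    by_contra hne
    exact hdist x hx y hy hne hxy
  have hcard : ((G.neighborFinset v).image φ).card = (G.neighborFinset v).card :=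
    Finset.card_image_of_injOn hinj
  have hsub : ({1} : Finset ℕ) ⊆ Finset.Icc 1 k := by
    simp [Finset.singleton_subset_iff, hk1]
  have : (G.neighborFinset v).card = k - 1 := by
    rw [← hcard, hfull, hv, Finset.card_sdiff_of_subset hsub, Nat.card_Icc]
    simp
  rw [← this]
  rfl


theorem stmt_6 {V : Type*} [Fintype V] [DecidableEq V]
    (G : SimpleGraph V) [DecidableRel G.Adj] (k : ℕ)
    (hχ : G.chromaticNumber = k)
    (hconn : G.Connected)
    (hsn : sudokuNumber G k = Fintype.card V - 1)
    (φ : V → ℕ) (hφ : IsOneMinimal G k φ)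
    (v : V) (hv : φ v = 1) :
    IsFull G k φ v ∧ G.degree v = k - 1 ∧
      ∀ a ∈ G.neighborFinset v, ∀ b ∈ G.neighborFinset v, a ≠ b → φ a ≠ φ b := by
  exact stmt_6' G k hsn φ hφ v hv
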